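/- Let V be a finite-dimensional complex normed vector space of complex dimension n, with Borel σ-algebra and additive Haar measure μ. Let F₁, F₂ be pseudonorms on V with unit balls Ω₁ = {F₁ < 1} and Ω₂ = {F₂ < 1}, and suppose α·F₁(v) ≤ F₂(v) ≤ β·F₁(v) for all v ∈ V, where 0 < α ≤ β. If h₁ and h₂ are positive definite Hermitian forms on V which are the Binet–Legendre metrics of Ω₁ and Ω₂ respectively, then for every v ∈ V: (α^{2n+2}/β^{2n}) · h₁(v, v) ≤ h₂(v, v) ≤ (β^{2n+2}/α^{2n}) · h₁(v, v). -/

import Mathlib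

open MeasureTheory

/-- The dual complex Binet–Legendre form of a set `Ω`:
`g*_Ω(θ, φ) = ((n+1)/μ(Ω)) ∫_Ω θ(η) conj(φ(η)) dμ(η)`. -/
noncomputable def dualBL {V : Type*} [NormedAddCommGroup V] [NormedSpace ℂ V]
    [MeasurableSpace V] (μ : Measure V) (n : ℕ) (Ω : Set V)
    (θ φ : V →ₗ[ℂ] ℂ) : ℂ :=
  (((n : ℂ) + 1) / ((μ Ω).toReal : ℂ)) * ∫ η in Ω, θ η * (starRingEnd ℂ) (φ η) ∂μ

/-- A pseudonorm: nonnegative, absolutely homogeneous over `ℂ`, vanishing only at `0`,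
with open bounded unit ball. -/
def IsPseudonorm {V : Type*} [NormedAddCommGroup V] [NormedSpace ℂ V]
    (F : V → ℝ) : Prop :=
  (∀ v : V, 0 ≤ F v) ∧
  (∀ (c : ℂ) (v : V), F (c • v) = ‖c‖ * F v) ∧
  (∀ v : V, F v = 0 → v = 0) ∧
  IsOpen {v : V | F v < 1} ∧ Bornology.IsBounded {v : V | F v < 1}

/-- A Hermitian form: conjugate-linear in the first argument, complex-linear in the
second, with `h(w,v) = conj (h(v,w))`. -/
def IsHermitianForm {V : Type*} [AddCommGroup V] [Module ℂ V] (h : V → V → ℂ) : Prop :=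
  (∀ (c : ℂ) (v w : V), h (c • v) w = (starRingEnd ℂ) c * h v w) ∧
  (∀ v v' w : V, h (v + v') w = h v w + h v' w) ∧
  (∀ (c : ℂ) (v w : V), h v (c • w) = c * h v w) ∧
  (∀ v w w' : V, h v (w + w') = h v w + h v w') ∧
  (∀ v w : V, h w v = (starRingEnd ℂ) (h v w))

/-- Positive definiteness: `h(v,v) > 0` for every `v ≠ 0`. -/
def IsPosDefForm {V : Type*} [AddCommGroup V] [Module ℂ V] (h : V → V → ℂ) : Prop :=
  ∀ v : V, v ≠ 0 → 0 < (h v v).re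

/-- `h` is the Binet–Legendre metric of `Ω`: there is a Riesz map `r` for `h`
(`θ(v) = h(r θ, v)` for all `v`) such that the dual Binet–Legendre form of `Ω`
coincides with `h` composed with `r`. -/
def IsBLMetric {V : Type*} [NormedAddCommGroup V] [NormedSpace ℂ V]
    [MeasurableSpace V] (μ : Measure V) (n : ℕ) (Ω : Set V)
    (h : V → V → ℂ) : Prop :=
  ∃ r : (V →ₗ[ℂ] ℂ) → V,
    (∀ (θ : V →ₗ[ℂ] ℂ) (v : V), θ v = h (r θ) v) ∧
    (∀ θ φ : V →ₗ[ℂ] ℂ, dualBL μ n Ω θ φ = h (r θ) (r φ))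


open Pointwise
set_option linter.unusedSectionVars false
set_option linter.unusedVariables false

section Herm
variable {V : Type*} [AddCommGroup V] [Module ℂ V] {h : V → V → ℂ}
  (hh : IsHermitianForm h)

include hh

lemma herm_zero_left (w : V) : h 0 w = 0 := by simpa using hh.1 0 0 w

lemma herm_zero_right (w : V) : h w 0 = 0 := by
  have := hh.2.2.2.2 0 w
  rw [herm_zero_left hh] at this
  simpa using this

lemma herm_diag_im (v : V) : (h v v).im = 0 := by
  have h2 := congrArg Complex.im (hh.2.2.2.2 v v)
  simp [Complex.conj_im] at h2
  linarith

lemma herm_diag_eq (v : V) : h v v = ((h v v).re : ℂ) := by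
  apply Complex.ext <;> simp [herm_diag_im hh v]

lemma herm_diag_nonneg (hp : IsPosDefForm h) (v : V) : 0 ≤ (h v v).re := by
  rcases eq_or_ne v 0 with rfl | hv
  · simp [herm_zero_left hh]
  · exact (hp v hv).le

lemma herm_expand (v w : V) (c : ℂ) :
    h (v + c • w) (v + c • w)
      = h v v + c * h v w + (starRingEnd ℂ) c * h w v + (starRingEnd ℂ) c * (c * h w w) := by
  rw [hh.2.1, hh.2.2.2.1, hh.2.2.2.1, hh.1, hh.2.2.1, hh.1, hh.2.2.1]
  ring

lemma herm_eq_of_forall (hp : IsPosDefForm h) {a b : V}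
    (hab : ∀ w, h a w = h b w) : a = b := by
  by_contra hne
  have hz : a + (-1 : ℂ) • b ≠ 0 := by
    intro hzz
    rw [neg_one_smul, add_neg_eq_zero] at hzz
    exact hne hzz
  have hzero : ∀ w, h (a + (-1 : ℂ) • b) w = 0 := by
    intro w
    rw [hh.2.1, hh.1, hab]
    simp
  have := hp _ hz
  rw [hzero _] at this
  simp at this

/-- Cauchy–Schwarz for a positive (semi)definite hermitian form. -/
lemma herm_cauchy_schwarz (hp : IsPosDefForm h) (v w : V) :
    Complex.normSq (h v w) ≤ (h v v).re * (h w w).re := by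
  rcases eq_or_ne w 0 with rfl | hw
  · simp [herm_zero_right hh]
  set t : ℝ := (h w w).re with ht
  have htpos : 0 < t := hp w hw
  set z : ℂ := h v w with hz
  have key : 0 ≤ (h (v + (-(starRingEnd ℂ) z / t) • w) (v + (-(starRingEnd ℂ) z / t) • w)).re :=
    herm_diag_nonneg hh hp _
  rw [herm_expand hh] at key
  have hwv : h w v = (starRingEnd ℂ) z := (hh.2.2.2.2 v w)
  rw [hwv, herm_diag_eq hh w, ← ht, ← hz] at key
  have expand : (h v v + -(starRingEnd ℂ) z / ↑t * z +
      (starRingEnd ℂ) (-(starRingEnd ℂ) z / ↑t) * (starRingEnd ℂ) z +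
      (starRingEnd ℂ) (-(starRingEnd ℂ) z / ↑t) * (-(starRingEnd ℂ) z / ↑t * ↑t)).re
      = (h v v).re - Complex.normSq z / t := by
    have h1 : (starRingEnd ℂ) (-(starRingEnd ℂ) z / ↑t) = -z / t := by
      simp [map_div₀]
    rw [h1]
    have hc : z * (starRingEnd ℂ) z = ((Complex.normSq z : ℝ) : ℂ) := Complex.mul_conj z
    have h2 : -(starRingEnd ℂ) z / ↑t * z = ((-Complex.normSq z / t : ℝ) : ℂ) := by
      push_cast
      linear_combination (-(1:ℂ)/(t:ℂ)) * hc
    have h3 : -z / ↑t * (starRingEnd ℂ) z = ((-Complex.normSq z / t : ℝ) : ℂ) := by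
      push_cast
      linear_combination (-(1:ℂ)/(t:ℂ)) * hc
    have h4 : -z / ↑t * (-(starRingEnd ℂ) z / ↑t * ↑t) = ((Complex.normSq z / t : ℝ) : ℂ) := by
      have : (t : ℂ) ≠ 0 := by exact_mod_cast htpos.ne'
      rw [Complex.ofReal_div, ← hc, div_mul_cancel₀ _ this]
      ring
    rw [h2, h3, h4]
    simp
    ring
  rw [expand] at key
  have : Complex.normSq z / t ≤ (h v v).re := by linarith
  calc Complex.normSq z = Complex.normSq z / t * t := by field_simp
  _ ≤ (h v v).re * t := by
      apply mul_le_mul_of_nonneg_right this htpos.le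

end Herm

section Analysis
variable {V : Type*} [NormedAddCommGroup V] [NormedSpace ℂ V] [FiniteDimensional ℂ V]
  [MeasurableSpace V] [BorelSpace V]
  (μ : Measure V) [μ.IsAddHaarMeasure]

lemma pseudonorm_zero {F : V → ℝ} (hF : IsPseudonorm F) : F 0 = 0 := by
  have := hF.2.1 0 0
  simpa using this

lemma ball_meas_pos {F : V → ℝ} (hF : IsPseudonorm F) : 0 < μ {v : V | F v < 1} :=
  hF.2.2.2.1.measure_pos μ ⟨0, by simp [pseudonorm_zero hF]⟩

lemma ball_meas_ne_top {F : V → ℝ} (hF : IsPseudonorm F) : μ {v : V | F v < 1} ≠ ⊤ :=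
  hF.2.2.2.2.measure_lt_top.ne

lemma integrableOn_normSq_of_bounded (θ : V →ₗ[ℂ] ℂ) {s : Set V}
    (hs : Bornology.IsBounded s) :
    IntegrableOn (fun η => Complex.normSq (θ η)) s μ := by
  have hcont : Continuous fun η : V => Complex.normSq (θ η) :=
    Complex.continuous_normSq.comp θ.continuous_of_finiteDimensional
  have hK : IsCompact (closure s) := hs.isCompact_closure
  exact ((hcont.continuousOn.integrableOn_compact hK).mono_set subset_closure)

lemma setIntegral_normSq_smul (θ : V →ₗ[ℂ] ℂ) (s : Set V) {t : ℝ} (ht : 0 < t) :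
    ∫ η in t • s, Complex.normSq (θ η) ∂μ
      = t ^ (Module.finrank ℝ V + 2) * ∫ η in s, Complex.normSq (θ η) ∂μ := by
  have h1 := Measure.setIntegral_comp_smul_of_pos μ (fun η => Complex.normSq (θ η)) s ht
  have h2 : ∀ x : V, Complex.normSq (θ (t • x)) = t ^ 2 * Complex.normSq (θ x) := by
    intro x
    rw [← Complex.coe_smul, θ.map_smul]
    simp [Complex.normSq_mul, Complex.normSq_ofReal, smul_eq_mul, sq]
  simp only [h2] at h1
  rw [MeasureTheory.integral_const_mul] at h1
  have h3 : ∫ η in t • s, Complex.normSq (θ η) ∂μ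
      = t ^ Module.finrank ℝ V * (t ^ 2 * ∫ η in s, Complex.normSq (θ η) ∂μ) := by
    rw [h1, smul_eq_mul]
    field_simp
  rw [h3, pow_add]
  ring

lemma dualBL_re (n : ℕ) (Ω : Set V) (θ : V →ₗ[ℂ] ℂ) :
    (dualBL μ n Ω θ θ).re
      = ((n : ℝ) + 1) / (μ Ω).toReal * ∫ η in Ω, Complex.normSq (θ η) ∂μ := by
  unfold dualBL
  have h1 : ∀ η : V, θ η * (starRingEnd ℂ) (θ η) = ((Complex.normSq (θ η) : ℝ) : ℂ) := by
    intro η; rw [Complex.mul_conj]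
  simp only [h1]
  rw [show ∫ η in Ω, ((Complex.normSq (θ η) : ℝ) : ℂ) ∂μ
      = ((∫ η in Ω, Complex.normSq (θ η) ∂μ : ℝ) : ℂ) from integral_ofReal]
  have : (((n : ℂ) + 1) / (((μ Ω).toReal : ℝ) : ℂ)) * ((∫ η in Ω, Complex.normSq (θ η) ∂μ : ℝ) : ℂ)
      = ((((n : ℝ) + 1) / (μ Ω).toReal * ∫ η in Ω, Complex.normSq (θ η) ∂μ : ℝ) : ℂ) := by
    push_cast
    ring
  rw [this, Complex.ofReal_re]

end Analysis

section GStar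
variable {V : Type*} [NormedAddCommGroup V] [NormedSpace ℂ V] [FiniteDimensional ℂ V]
  [MeasurableSpace V] [BorelSpace V]
  (μ : Measure V) [μ.IsAddHaarMeasure]

lemma pseudonorm_smul_real {F : V → ℝ} (hF : IsPseudonorm F) (t : ℝ) (ht : 0 ≤ t) (v : V) :
    F (t • v) = t * F v := by
  rw [← Complex.coe_smul, hF.2.1]
  simp [Complex.norm_of_nonneg ht, ht]

lemma gstar_comparison (n : ℕ) (hn : Module.finrank ℂ V = n)
    (F₁ F₂ : V → ℝ) (hF₁ : IsPseudonorm F₁) (hF₂ : IsPseudonorm F₂)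
    (α β : ℝ) (hα : 0 < α) (hβ : 0 < β)
    (hc1 : ∀ v : V, α * F₁ v ≤ F₂ v) (hc2 : ∀ v : V, F₂ v ≤ β * F₁ v)
    (θ : V →ₗ[ℂ] ℂ) :
    (dualBL μ n {v : V | F₂ v < 1} θ θ).re
      ≤ (β ^ (2 * n) / α ^ (2 * n + 2)) * (dualBL μ n {v : V | F₁ v < 1} θ θ).re := by
  set Ω₁ := {v : V | F₁ v < 1} with hΩ₁
  set Ω₂ := {v : V | F₂ v < 1} with hΩ₂
  have hD : Module.finrank ℝ V = 2 * n := by rw [finrank_real_of_complex, hn]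
  -- inclusions
  have hA : Ω₂ ⊆ α⁻¹ • Ω₁ := by
    intro v hv
    refine ⟨α • v, ?_, show α⁻¹ • (α • v) = v by
      rw [smul_smul, inv_mul_cancel₀ hα.ne', one_smul]⟩
    have heq : F₁ (α • v) = α * F₁ v := pseudonorm_smul_real hF₁ α hα.le v
    have hv2 : F₂ v < 1 := hv
    show F₁ (α • v) < 1
    rw [heq]
    exact lt_of_le_of_lt (hc1 v) hv2
  have hB : β⁻¹ • Ω₁ ⊆ Ω₂ := by
    rintro _ ⟨w, hw, rfl⟩
    have hw1 : F₁ w < 1 := hw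
    have : F₂ (β⁻¹ • w) ≤ β * F₁ (β⁻¹ • w) := hc2 _
    rw [pseudonorm_smul_real hF₁ β⁻¹ (by positivity) w] at this
    have : F₂ (β⁻¹ • w) ≤ F₁ w := by
      calc F₂ (β⁻¹ • w) ≤ β * (β⁻¹ * F₁ w) := this
      _ = F₁ w := by field_simp
    exact lt_of_le_of_lt this hw1
  -- measures
  have hm₁pos : 0 < (μ Ω₁).toReal :=
    ENNReal.toReal_pos (ball_meas_pos μ hF₁).ne' (ball_meas_ne_top μ hF₁)
  have hm₂pos : 0 < (μ Ω₂).toReal :=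
    ENNReal.toReal_pos (ball_meas_pos μ hF₂).ne' (ball_meas_ne_top μ hF₂)
  have hm : β⁻¹ ^ (2 * n) * (μ Ω₁).toReal ≤ (μ Ω₂).toReal := by
    have h1 : μ (β⁻¹ • Ω₁) ≤ μ Ω₂ := measure_mono hB
    rw [Measure.addHaar_smul_of_nonneg μ (by positivity) Ω₁, hD] at h1
    have h2 := ENNReal.toReal_mono (ball_meas_ne_top μ hF₂) h1
    rwa [ENNReal.toReal_mul, ENNReal.toReal_ofReal (by positivity)] at h2
  -- integrals
  have hint : IntegrableOn (fun η => Complex.normSq (θ η)) (α⁻¹ • Ω₁) μ :=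
    integrableOn_normSq_of_bounded μ θ (hF₁.2.2.2.2.smul₀ α⁻¹)
  have hI : ∫ η in Ω₂, Complex.normSq (θ η) ∂μ
      ≤ α⁻¹ ^ (2 * n + 2) * ∫ η in Ω₁, Complex.normSq (θ η) ∂μ := by
    have h1 : ∫ η in Ω₂, Complex.normSq (θ η) ∂μ
        ≤ ∫ η in α⁻¹ • Ω₁, Complex.normSq (θ η) ∂μ := by
      apply setIntegral_mono_set hint
      · filter_upwards with x using Complex.normSq_nonneg _
      · exact HasSubset.Subset.eventuallyLE hA
    rw [setIntegral_normSq_smul μ θ Ω₁ (by positivity : (0:ℝ) < α⁻¹), hD] at h1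
    exact h1
  have hI₁ : 0 ≤ ∫ η in Ω₁, Complex.normSq (θ η) ∂μ :=
    setIntegral_nonneg hF₁.2.2.2.1.measurableSet (fun x _ => Complex.normSq_nonneg _)
  -- assemble
  rw [dualBL_re, dualBL_re]
  set m₁ := (μ Ω₁).toReal
  set m₂ := (μ Ω₂).toReal
  set I₁ := ∫ η in Ω₁, Complex.normSq (θ η) ∂μ
  set I₂ := ∫ η in Ω₂, Complex.normSq (θ η) ∂μ
  have k1 : (0:ℝ) < (n:ℝ) + 1 := by positivity
  calc ((n:ℝ) + 1) / m₂ * I₂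
      ≤ ((n:ℝ) + 1) / m₂ * (α⁻¹ ^ (2 * n + 2) * I₁) := by
        apply mul_le_mul_of_nonneg_left hI (by positivity)
    _ ≤ ((n:ℝ) + 1) / (β⁻¹ ^ (2 * n) * m₁) * (α⁻¹ ^ (2 * n + 2) * I₁) := by
        apply mul_le_mul_of_nonneg_right _ (by positivity)
        exact div_le_div_of_nonneg_left k1.le (by positivity) hm
    _ = β ^ (2 * n) / α ^ (2 * n + 2) * (((n:ℝ) + 1) / m₁ * I₁) := by
        field_simp
        rw [mul_right_comm, ← mul_pow, one_div_mul_cancel hα.ne', mul_right_comm _ I₁, ← mul_pow,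
          one_div_mul_cancel hβ.ne', one_pow, one_pow]

end GStar

section Main
variable {V : Type*} [NormedAddCommGroup V] [NormedSpace ℂ V] [FiniteDimensional ℂ V]
  [MeasurableSpace V] [BorelSpace V]
  (μ : Measure V) [μ.IsAddHaarMeasure]

lemma bl_one_side (n : ℕ) (hn : Module.finrank ℂ V = n)
    (F₁ F₂ : V → ℝ) (hF₁ : IsPseudonorm F₁) (hF₂ : IsPseudonorm F₂)
    (α β : ℝ) (hα : 0 < α) (hβ : 0 < β)
    (hc1 : ∀ v : V, α * F₁ v ≤ F₂ v) (hc2 : ∀ v : V, F₂ v ≤ β * F₁ v)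
    (h₁ h₂ : V → V → ℂ)
    (h₁herm : IsHermitianForm h₁) (h₁pos : IsPosDefForm h₁)
    (h₂herm : IsHermitianForm h₂) (h₂pos : IsPosDefForm h₂)
    (h₁BL : IsBLMetric μ n {v : V | F₁ v < 1} h₁)
    (h₂BL : IsBLMetric μ n {v : V | F₂ v < 1} h₂) :
    ∀ v : V, (h₁ v v).re ≤ (β ^ (2 * n) / α ^ (2 * n + 2)) * (h₂ v v).re := by
  intro v
  rcases eq_or_ne v 0 with rfl | hv
  · rw [herm_zero_left h₁herm, herm_zero_left h₂herm]
    simp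
  obtain ⟨r₁, hr₁, hg₁⟩ := h₁BL
  obtain ⟨r₂, hr₂, hg₂⟩ := h₂BL
  set c : ℝ := β ^ (2 * n) / α ^ (2 * n + 2) with hc
  have hcpos : 0 < c := by positivity
  -- the functional θ = h₁(v, ·)
  set θ : V →ₗ[ℂ] ℂ :=
    { toFun := fun w => h₁ v w
      map_add' := fun x y => h₁herm.2.2.2.1 v x y
      map_smul' := fun d x => by simp [h₁herm.2.2.1 d v x] } with hθ
  have hθapp : ∀ w, θ w = h₁ v w := fun w => rfl
  have hr₁v : r₁ θ = v := by
    apply herm_eq_of_forall h₁herm h₁pos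
    intro w
    rw [← hr₁ θ w, hθapp w]
  -- comparison of dual forms at θ
  have key : (h₂ (r₂ θ) (r₂ θ)).re ≤ c * (h₁ v v).re := by
    have := gstar_comparison μ n hn F₁ F₂ hF₁ hF₂ α β hα hβ hc1 hc2 θ
    rw [hg₂ θ θ, hg₁ θ θ, hr₁v] at this
    exact this
  -- Cauchy–Schwarz for h₂
  have hA : 0 < (h₁ v v).re := h₁pos v hv
  set A : ℝ := (h₁ v v).re with hAdef
  have hval : h₂ (r₂ θ) v = ((A : ℝ) : ℂ) := by
    rw [← hr₂ θ v, hθapp v, herm_diag_eq h₁herm v]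
  have hcs : Complex.normSq (h₂ (r₂ θ) v) ≤ (h₂ (r₂ θ) (r₂ θ)).re * (h₂ v v).re :=
    herm_cauchy_schwarz h₂herm h₂pos _ _
  rw [hval, Complex.normSq_ofReal] at hcs
  have h₂nonneg : 0 ≤ (h₂ v v).re := herm_diag_nonneg h₂herm h₂pos v
  have step : A * A ≤ (c * (h₂ v v).re) * A := by
    calc A * A ≤ (h₂ (r₂ θ) (r₂ θ)).re * (h₂ v v).re := hcs
    _ ≤ (c * A) * (h₂ v v).re := mul_le_mul_of_nonneg_right key h₂nonneg
    _ = (c * (h₂ v v).re) * A := by ring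
  exact le_of_mul_le_mul_right step hA

end Main

/-- If `α F₁ ≤ F₂ ≤ β F₁` for pseudonorms `F₁, F₂` with `0 < α ≤ β`, then
the Binet–Legendre metrics `h₁, h₂` of their unit balls satisfy
`(α^{2n+2}/β^{2n}) h₁(v,v) ≤ h₂(v,v) ≤ (β^{2n+2}/α^{2n}) h₁(v,v)`. -/
theorem blMetric_comparison
    {V : Type*} [NormedAddCommGroup V] [NormedSpace ℂ V] [FiniteDimensional ℂ V]
    [MeasurableSpace V] [BorelSpace V]
    (μ : Measure V) [μ.IsAddHaarMeasure]
    (n : ℕ) (hn : Module.finrank ℂ V = n)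
    (F₁ F₂ : V → ℝ) (hF₁ : IsPseudonorm F₁) (hF₂ : IsPseudonorm F₂)
    (α β : ℝ) (hα : 0 < α) (hαβ : α ≤ β)
    (hcomp : ∀ v : V, α * F₁ v ≤ F₂ v ∧ F₂ v ≤ β * F₁ v)
    (h₁ h₂ : V → V → ℂ)
    (h₁herm : IsHermitianForm h₁) (h₁pos : IsPosDefForm h₁)
    (h₂herm : IsHermitianForm h₂) (h₂pos : IsPosDefForm h₂)
    (h₁BL : IsBLMetric μ n {v : V | F₁ v < 1} h₁)
    (h₂BL : IsBLMetric μ n {v : V | F₂ v < 1} h₂) :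
    ∀ v : V,
      (α ^ (2 * n + 2) / β ^ (2 * n)) * (h₁ v v).re ≤ (h₂ v v).re ∧
        (h₂ v v).re ≤ (β ^ (2 * n + 2) / α ^ (2 * n)) * (h₁ v v).re := by
  intro v
  have hβ : 0 < β := lt_of_lt_of_le hα hαβ
  have hc1 : ∀ w : V, α * F₁ w ≤ F₂ w := fun w => (hcomp w).1
  have hc2 : ∀ w : V, F₂ w ≤ β * F₁ w := fun w => (hcomp w).2
  have low := bl_one_side μ n hn F₁ F₂ hF₁ hF₂ α β hα hβ hc1 hc2 h₁ h₂
    h₁herm h₁pos h₂herm h₂pos h₁BL h₂BL v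
  have hc1' : ∀ w : V, β⁻¹ * F₂ w ≤ F₁ w := by
    intro w
    rw [inv_mul_le_iff₀ hβ]
    exact hc2 w
  have hc2' : ∀ w : V, F₁ w ≤ α⁻¹ * F₂ w := by
    intro w
    rw [le_inv_mul_iff₀ hα]
    exact hc1 w
  have up := bl_one_side μ n hn F₂ F₁ hF₂ hF₁ β⁻¹ α⁻¹ (by positivity) (by positivity)
    hc1' hc2' h₂ h₁ h₂herm h₂pos h₁herm h₁pos h₂BL h₁BL v
  have h₂nonneg : 0 ≤ (h₂ v v).re := herm_diag_nonneg h₂herm h₂pos v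
  constructor
  · calc (α ^ (2 * n + 2) / β ^ (2 * n)) * (h₁ v v).re
        ≤ (α ^ (2 * n + 2) / β ^ (2 * n)) * ((β ^ (2 * n) / α ^ (2 * n + 2)) * (h₂ v v).re) :=
          mul_le_mul_of_nonneg_left low (by positivity)
      _ = (h₂ v v).re := by
          field_simp
  · calc (h₂ v v).re
        ≤ ((α⁻¹) ^ (2 * n) / (β⁻¹) ^ (2 * n + 2)) * (h₁ v v).re := up
      _ = (β ^ (2 * n + 2) / α ^ (2 * n)) * (h₁ v v).re := by
          congr 1
          field_simp
          rw [← mul_pow, ← mul_pow, one_div_mul_cancel hα.ne', one_div_mul_cancel hβ.ne', one_pow, one_pow]
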